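/- Majorization preservation over passive states for ladder kernels: let P be a row-stochastic kernel on ℕ (finitely supported rows) satisfying both (a) the ladder condition ∀ k, n: Σ_{j=0}^n P(k,j) ≥ Σ_{j=0}^n P(k+1,j), and (b) passivity preservation (it maps nonincreasing finitely supported distributions to nonincreasing distributions). Then for any two nonincreasing finitely supported probability distributions r, s with r majorizing s (∀ n, Σ_{i=0}^n r_i ≥ Σ_{i=0}^n s_i), the pushed-forward distributions rP and sP are both nonincreasing and rP majorizes sP. -/

import Mathlib

open scoped NNReal BigOperators

lemma abel_maj (N : ℕ) (a b F : ℕ → ℝ)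
    (hmaj : ∀ n, ∑ i ∈ Finset.range (n + 1), b i ≤ ∑ i ∈ Finset.range (n + 1), a i)
    (heq : ∑ i ∈ Finset.range (N + 1), a i = ∑ i ∈ Finset.range (N + 1), b i)
    (hF : ∀ i, F (i + 1) ≤ F i) :
    ∑ i ∈ Finset.range (N + 1), b i * F i ≤ ∑ i ∈ Finset.range (N + 1), a i * F i := by
  have ha := Finset.sum_range_by_parts F a (N + 1)
  have hb := Finset.sum_range_by_parts F b (N + 1)
  simp only [smul_eq_mul, Nat.add_sub_cancel] at ha hb
  have hsum : ∑ i ∈ Finset.range N, (F (i + 1) - F i) * ∑ j ∈ Finset.range (i + 1), a j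
      ≤ ∑ i ∈ Finset.range N, (F (i + 1) - F i) * ∑ j ∈ Finset.range (i + 1), b j := by
    apply Finset.sum_le_sum
    intro i _
    exact mul_le_mul_of_nonpos_left (hmaj i) (by linarith [hF i])
  calc ∑ i ∈ Finset.range (N + 1), b i * F i
      = ∑ i ∈ Finset.range (N + 1), F i * b i := by
        simp [mul_comm]
    _ = F N * ∑ i ∈ Finset.range (N + 1), b i
        - ∑ i ∈ Finset.range N, (F (i + 1) - F i) * ∑ j ∈ Finset.range (i + 1), b j := hb
    _ ≤ F N * ∑ i ∈ Finset.range (N + 1), a i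
        - ∑ i ∈ Finset.range N, (F (i + 1) - F i) * ∑ j ∈ Finset.range (i + 1), a j := by
        rw [heq]; exact sub_le_sub_left hsum _
    _ = ∑ i ∈ Finset.range (N + 1), F i * a i := ha.symm
    _ = ∑ i ∈ Finset.range (N + 1), a i * F i := by
        simp [mul_comm]

theorem majorization_preservation_passive
    (P : ℕ × ℕ → ℝ≥0)
    (hrow_fin : ∀ i : ℕ, ∃ M : ℕ, ∀ j, M < j → P (i, j) = 0)
    (hrow_sum : ∀ i : ℕ, ∑' j : ℕ, P (i, j) = 1)
    (hladder : ∀ k n : ℕ,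
      ∑ j ∈ Finset.range (n + 1), P (k + 1, j) ≤ ∑ j ∈ Finset.range (n + 1), P (k, j))
    (hpassive : ∀ (u : ℕ → ℝ≥0), (∀ k, u (k + 1) ≤ u k) → (∃ M, ∀ i, M < i → u i = 0) →
      (∑' i, u i = 1) → ∀ k : ℕ, (∑' i : ℕ, u i * P (i, k + 1)) ≤ ∑' i : ℕ, u i * P (i, k))
    (r s : ℕ → ℝ≥0)
    (hrmono : ∀ k, r (k + 1) ≤ r k) (hsmono : ∀ k, s (k + 1) ≤ s k)
    (hrfin : ∃ M, ∀ i, M < i → r i = 0) (hsfin : ∃ M, ∀ i, M < i → s i = 0)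
    (hr1 : ∑' i, r i = 1) (hs1 : ∑' i, s i = 1)
    (hmaj : ∀ n : ℕ, ∑ i ∈ Finset.range (n + 1), s i ≤ ∑ i ∈ Finset.range (n + 1), r i) :
    (∀ k : ℕ, (∑' i : ℕ, r i * P (i, k + 1)) ≤ ∑' i : ℕ, r i * P (i, k)) ∧
    (∀ k : ℕ, (∑' i : ℕ, s i * P (i, k + 1)) ≤ ∑' i : ℕ, s i * P (i, k)) ∧
    (∀ n : ℕ,
      ∑ j ∈ Finset.range (n + 1), (∑' i : ℕ, s i * P (i, j))
        ≤ ∑ j ∈ Finset.range (n + 1), (∑' i : ℕ, r i * P (i, j))) := by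
  refine ⟨hpassive r hrmono hrfin hr1, hpassive s hsmono hsfin hs1, ?_⟩
  intro n
  obtain ⟨Mr, hMr⟩ := hrfin
  obtain ⟨Ms, hMs⟩ := hsfin
  set N := max Mr Ms with hN
  have hr0 : ∀ i, N < i → r i = 0 := fun i hi =>
    hMr i (lt_of_le_of_lt (le_max_left _ _) hi)
  have hs0 : ∀ i, N < i → s i = 0 := fun i hi =>
    hMs i (lt_of_le_of_lt (le_max_right _ _) hi)
  have hout : ∀ i, i ∉ Finset.range (N + 1) → N < i := by
    intro i hi
    simp only [Finset.mem_range] at hi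
    omega
  have hrt : ∀ j, (∑' i : ℕ, r i * P (i, j)) = ∑ i ∈ Finset.range (N + 1), r i * P (i, j) := by
    intro j
    refine tsum_eq_sum ?_
    intro i hi
    rw [hr0 i (hout i hi), zero_mul]
  have hst : ∀ j, (∑' i : ℕ, s i * P (i, j)) = ∑ i ∈ Finset.range (N + 1), s i * P (i, j) := by
    intro j
    refine tsum_eq_sum ?_
    intro i hi
    rw [hs0 i (hout i hi), zero_mul]
  have hrN : ∑ i ∈ Finset.range (N + 1), r i = 1 := by
    rw [← hr1]
    exact (tsum_eq_sum (fun i hi => hr0 i (hout i hi))).symm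
  have hsN : ∑ i ∈ Finset.range (N + 1), s i = 1 := by
    rw [← hs1]
    exact (tsum_eq_sum (fun i hi => hs0 i (hout i hi))).symm
  rw [Finset.sum_congr rfl (fun j _ => hst j), Finset.sum_congr rfl (fun j _ => hrt j)]
  have hswap : ∀ u : ℕ → ℝ≥0,
      ∑ j ∈ Finset.range (n + 1), ∑ i ∈ Finset.range (N + 1), u i * P (i, j)
        = ∑ i ∈ Finset.range (N + 1), u i * ∑ j ∈ Finset.range (n + 1), P (i, j) := by
    intro u
    rw [Finset.sum_comm]
    exact Finset.sum_congr rfl fun i _ => (Finset.mul_sum _ _ _).symm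
  rw [hswap r, hswap s]
  rw [← NNReal.coe_le_coe]
  have key := abel_maj N (fun i => (r i : ℝ)) (fun i => (s i : ℝ))
    (fun i => ((∑ j ∈ Finset.range (n + 1), P (i, j) : ℝ≥0) : ℝ)) ?_ ?_ ?_
  · push_cast at key ⊢
    convert key using 2 <;> push_cast <;> ring
  · intro m
    rw [← NNReal.coe_sum, ← NNReal.coe_sum]
    exact_mod_cast hmaj m
  · rw [← NNReal.coe_sum, ← NNReal.coe_sum, hrN, hsN]
  · intro i
    exact_mod_cast hladder i n
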